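/- Let k ≥ 1 be an integer and define ψ(r) = 4·arctan(r^k). Then for every r > 0 one has ψ″(r) + ψ′(r)/r − k²·sin(2ψ(r))/(2r²) = k²·r^{−2}·sin(ψ(r))·(1 − cos(ψ(r))). In particular this quantity is ≥ 0 for every r ∈ (0,1] and vanishes at r = 1; moreover 0 ≤ ψ(r) ≤ π for all r ∈ [0,1] and ψ(1) = π. -/

import Mathlib

open Real Set

lemma sin_two_arctan (x : ℝ) : Real.sin (2 * Real.arctan x) = 2 * x / (1 + x ^ 2) := by
  have h : (0:ℝ) < 1 + x ^ 2 := by positivity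
  have hs : Real.sqrt (1 + x ^ 2) * Real.sqrt (1 + x ^ 2) = 1 + x ^ 2 :=
    Real.mul_self_sqrt h.le
  rw [Real.sin_two_mul, Real.sin_arctan, Real.cos_arctan, mul_assoc, div_mul_div_comm, hs,
    mul_one]
  ring

lemma cos_two_arctan (x : ℝ) : Real.cos (2 * Real.arctan x) = (1 - x ^ 2) / (1 + x ^ 2) := by
  have h : (0:ℝ) < 1 + x ^ 2 := by positivity
  have hs : Real.sqrt (1 + x ^ 2) ^ 2 = 1 + x ^ 2 := Real.sq_sqrt h.le
  rw [Real.cos_two_mul, Real.cos_arctan, div_pow, hs, one_pow]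
  field_simp
  ring

lemma sin_four_arctan (x : ℝ) :
    Real.sin (4 * Real.arctan x) = 4 * x * (1 - x ^ 2) / (1 + x ^ 2) ^ 2 := by
  have h : (0:ℝ) < 1 + x ^ 2 := by positivity
  have h4 : (4:ℝ) * Real.arctan x = 2 * (2 * Real.arctan x) := by ring
  rw [h4, Real.sin_two_mul, sin_two_arctan, cos_two_arctan]
  field_simp
  ring

lemma cos_four_arctan (x : ℝ) :
    Real.cos (4 * Real.arctan x) = (x ^ 4 - 6 * x ^ 2 + 1) / (1 + x ^ 2) ^ 2 := by
  have h : (0:ℝ) < 1 + x ^ 2 := by positivity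
  have h4 : (4:ℝ) * Real.arctan x = 2 * (2 * Real.arctan x) := by ring
  rw [h4, Real.cos_two_mul, cos_two_arctan, div_pow]
  field_simp
  ring

theorem four_arctan_initial_data
    (k : ℕ) (hk : 1 ≤ k)
    (ψ : ℝ → ℝ) (hψ : ∀ r, ψ r = 4 * arctan (r ^ k)) :
    (∀ r : ℝ, 0 < r →
      deriv (deriv ψ) r + deriv ψ r / r - (k : ℝ) ^ 2 * sin (2 * ψ r) / (2 * r ^ 2)
        = (k : ℝ) ^ 2 / r ^ 2 * sin (ψ r) * (1 - cos (ψ r))) ∧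
    (∀ r ∈ Ioc (0:ℝ) 1, 0 ≤ (k : ℝ) ^ 2 / r ^ 2 * sin (ψ r) * (1 - cos (ψ r))) ∧
    ((k : ℝ) ^ 2 / (1:ℝ) ^ 2 * sin (ψ 1) * (1 - cos (ψ 1)) = 0) ∧
    (∀ r ∈ Icc (0:ℝ) 1, 0 ≤ ψ r ∧ ψ r ≤ π) ∧
    ψ 1 = π := by
  -- first derivative
  have hd1 : ∀ x : ℝ, HasDerivAt ψ
      (4 * ((k : ℝ) * x ^ (k - 1)) / (1 + (x ^ k) ^ 2)) x := by
    intro x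
    have h1 : HasDerivAt (fun y : ℝ => y ^ k) ((k : ℝ) * x ^ (k - 1)) x :=
      hasDerivAt_pow k x
    have h2 := (h1.arctan).const_mul (4:ℝ)
    have hfun : ψ = fun y : ℝ => 4 * arctan (y ^ k) := funext hψ
    rw [hfun]
    refine h2.congr_deriv ?_
    ring
  have hg : deriv ψ = fun x : ℝ => 4 * ((k : ℝ) * x ^ (k - 1)) / (1 + (x ^ k) ^ 2) :=
    funext fun x => (hd1 x).deriv
  -- bounds on ψ
  have hbound : ∀ r ∈ Icc (0:ℝ) 1, 0 ≤ ψ r ∧ ψ r ≤ π := by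
    intro r hr
    have h0 : (0:ℝ) ≤ r ^ k := pow_nonneg hr.1 k
    have h1 : r ^ k ≤ 1 := pow_le_one₀ hr.1 hr.2
    have ha0 : 0 ≤ arctan (r ^ k) := by
      have := arctan_strictMono.monotone h0
      rwa [arctan_zero] at this
    have ha1 : arctan (r ^ k) ≤ π / 4 := by
      have := arctan_strictMono.monotone h1
      rwa [arctan_one] at this
    constructor
    · rw [hψ]; linarith
    · rw [hψ]; linarith
  have hψ1 : ψ 1 = π := by
    rw [hψ, one_pow, arctan_one]; ring
  refine ⟨?_, ?_, ?_, hbound, hψ1⟩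
  · -- the main identity
    intro r hr
    have hrne : r ≠ 0 := hr.ne'
    have htpos : (0:ℝ) < r ^ k := pow_pos hr k
    have hden : (0:ℝ) < 1 + (r ^ k) ^ 2 := by positivity
    -- second derivative
    have hN : HasDerivAt (fun x : ℝ => 4 * ((k : ℝ) * x ^ (k - 1)))
        (4 * (k : ℝ) * (((k - 1 : ℕ) : ℝ) * r ^ (k - 1 - 1))) r := by
      have h := (hasDerivAt_pow (k - 1) r).const_mul (4 * (k : ℝ))
      have e1 : (fun x : ℝ => 4 * ((k : ℝ) * x ^ (k - 1)))
          = fun x : ℝ => 4 * (k : ℝ) * x ^ (k - 1) := by funext x; ring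
      rw [e1]
      exact h
    have hD := ((hasDerivAt_pow k r).pow 2).const_add (1:ℝ)
    have hgg := hN.div hD hden.ne'
    -- power simplifications
    have hp1 : r ^ (k - 1) = r ^ k / r := by
      rw [eq_div_iff hrne, ← pow_succ, Nat.sub_add_cancel hk]
    have hcast : ((k - 1 : ℕ) : ℝ) = (k : ℝ) - 1 := by
      rw [Nat.cast_sub hk, Nat.cast_one]
    have hp2 : ((k - 1 : ℕ) : ℝ) * r ^ (k - 1 - 1) = ((k : ℝ) - 1) * (r ^ k) / r ^ 2 := by
      rcases Nat.exists_eq_add_of_le hk with ⟨m, rfl⟩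
      rcases m with _ | m
      · simp
      · have he : 1 + (m + 1) - 1 - 1 = m := by omega
        rw [he, hcast, eq_div_iff (by positivity : (r:ℝ) ^ 2 ≠ 0)]
        have he2 : r ^ (1 + (m + 1)) = r ^ m * r ^ 2 := by
          rw [← pow_add]; congr 1; omega
        rw [he2]; ring
    simp only [hg]
    have hgg' : HasDerivAt (fun x : ℝ => 4 * ((k : ℝ) * x ^ (k - 1)) / (1 + (x ^ k) ^ 2))
        ((4 * (k : ℝ) * (((k - 1 : ℕ) : ℝ) * r ^ (k - 1 - 1)) * (1 + (r ^ k) ^ 2) -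
          4 * ((k : ℝ) * r ^ (k - 1)) * (((2 : ℕ) : ℝ) * (r ^ k) ^ (2 - 1) * ((k : ℝ) * r ^ (k - 1)))) /
          (1 + (r ^ k) ^ 2) ^ 2) r := hgg
    rw [hgg'.deriv]
    simp only [hψ, Real.sin_two_mul, sin_four_arctan, cos_four_arctan]
    rw [hp2, hp1]
    push_cast
    set t := r ^ k with ht
    have hdenne : (1:ℝ) + t ^ 2 ≠ 0 := hden.ne'
    field_simp
    ring
  · intro r hr
    have h0 : 0 ≤ ψ r ∧ ψ r ≤ π := hbound r ⟨hr.1.le, hr.2⟩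
    have hsin : 0 ≤ sin (ψ r) := Real.sin_nonneg_of_nonneg_of_le_pi h0.1 h0.2
    have hcos : cos (ψ r) ≤ 1 := Real.cos_le_one _
    have hkk : (0:ℝ) ≤ (k : ℝ) ^ 2 / r ^ 2 := by positivity
    exact mul_nonneg (mul_nonneg hkk hsin) (by linarith : (0:ℝ) ≤ 1 - cos (ψ r))
  · rw [hψ1]
    simp [Real.sin_pi]
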